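/- Let q ∈ ℝ[x₁,…,xₙ] be a quadratic form such that q(x') > 0 for some x'. Then for every point x with q(x) ≥ 0 and every ε > 0, the open ball B_ε(x) intersects the interior of {y : q(y) ≥ 0}. -/

import Mathlib

open MvPolynomial

private lemma eval_monomial_pair {n : ℕ} (a b : Fin n) (c : ℝ) (v : Fin n → ℝ) :
    eval v (monomial (Finsupp.single a 1 + Finsupp.single b 1) c) = c * (v a * v b) := by
  rw [eval_monomial, Finsupp.prod_add_index' (by simp) (fun i m k => pow_add _ _ _),
    Finsupp.prod_single_index (by simp), Finsupp.prod_single_index (by simp)]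
  ring

private lemma key_expand {n : ℕ} (q : MvPolynomial (Fin n) ℝ) (hq : q.IsHomogeneous 2)
    (x y : Fin n → ℝ) (t : ℝ) :
    eval (x + t • y) q =
      eval x q + t * (eval (x + y) q - eval x q - eval y q) + t ^ 2 * eval y q := by
  have hsum : ∀ v : Fin n → ℝ, eval v q = ∑ d ∈ q.support, eval v (monomial d (coeff d q)) := by
    intro v
    conv_lhs => rw [q.as_sum]
    rw [map_sum]
  rw [hsum (x + t • y), hsum x, hsum (x + y), hsum y, ← Finset.sum_sub_distrib,
    ← Finset.sum_sub_distrib, Finset.mul_sum, Finset.mul_sum, ← Finset.sum_add_distrib,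
    ← Finset.sum_add_distrib]
  apply Finset.sum_congr rfl
  intro d hd
  have hdeg : d.degree = 2 := by
    have := hq (mem_support_iff.mp hd)
    rwa [Finsupp.degree_eq_weight_one]
  have hcard : Multiset.card d.toMultiset = 2 := by
    rw [Finsupp.card_toMultiset]
    simpa [Finsupp.degree_apply, Finsupp.sum] using hdeg
  obtain ⟨a, b, hab⟩ := Multiset.card_eq_two.mp hcard
  have hd2 : d = Finsupp.single a 1 + Finsupp.single b 1 := by
    have h1 : Multiset.toFinsupp d.toMultiset = Multiset.toFinsupp ({a, b} : Multiset (Fin n)) :=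
      by rw [hab]
    rw [Finsupp.toMultiset_toFinsupp] at h1
    rw [h1, show ({a, b} : Multiset (Fin n)) = {a} + {b} by
        rw [Multiset.insert_eq_cons, ← Multiset.singleton_add],
      Multiset.toFinsupp_add, Multiset.toFinsupp_singleton, Multiset.toFinsupp_singleton]
  rw [hd2, eval_monomial_pair, eval_monomial_pair, eval_monomial_pair, eval_monomial_pair]
  simp only [Pi.add_apply, Pi.smul_apply, smul_eq_mul]
  ring

theorem stmt_9 (n : ℕ) (q : MvPolynomial (Fin n) ℝ) (hq : q.IsHomogeneous 2)
    (x' : Fin n → ℝ) (hx' : 0 < eval x' q) :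
    ∀ x : Fin n → ℝ, 0 ≤ eval x q → ∀ ε > 0,
      (Metric.ball x ε ∩ interior {y : Fin n → ℝ | 0 ≤ eval y q}).Nonempty := by
  intro x hx ε hε
  set B := eval (x + x') q - eval x q - eval x' q with hB
  set δ := ε / (‖x'‖ + 1) with hδ
  have hδpos : 0 < δ := div_pos hε (by positivity)
  set t := if 0 ≤ B then δ else -δ with ht
  have ht0 : t ≠ 0 := by
    rw [ht]; split_ifs <;> intro h <;> linarith
  have htB : 0 ≤ t * B := by
    rw [ht]; split_ifs with h
    · positivity
    · push_neg at h
      nlinarith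
  have habs : |t| = δ := by
    rw [ht]; split_ifs
    · exact abs_of_pos hδpos
    · rw [abs_neg]; exact abs_of_pos hδpos
  have ht2 : 0 < t ^ 2 := by
    rcases ht0.lt_or_gt with h | h <;> nlinarith
  have hpos : 0 < eval (x + t • x') q := by
    rw [key_expand q hq x x' t, ← hB]
    nlinarith [mul_pos ht2 hx']
  have hopen : IsOpen {y : Fin n → ℝ | 0 < eval y q} :=
    isOpen_lt continuous_const (MvPolynomial.continuous_eval q)
  refine ⟨x + t • x', ?_, ?_⟩
  · rw [Metric.mem_ball, dist_eq_norm, add_sub_cancel_left, norm_smul, Real.norm_eq_abs, habs]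
    calc δ * ‖x'‖ < δ * (‖x'‖ + 1) := by nlinarith
      _ = ε := by rw [hδ]; field_simp
  · have hsub : {y : Fin n → ℝ | 0 < eval y q} ⊆ interior {y : Fin n → ℝ | 0 ≤ eval y q} :=
      interior_maximal (fun y hy => le_of_lt (Set.mem_setOf_eq ▸ hy)) hopen
    exact hsub hpos
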